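/- (Abel's identity) For every integer n ≥ 1 and all real numbers x₁, x₂: (x₁+x₂+n)^{n} = (x₂+n)^{n} + ∑_{k=1}^{n} C(n,k) · x₁ · (x₁+k)^{k−1} · (x₂+n−k)^{n−k}, where C(n,k) denotes the binomial coefficient. -/

import Mathlib

open Finset fwdDiff

lemma delta_shift (a : ℝ) (m : ℕ) :
    Δ_[(1:ℝ)] (fun y => (y + a) ^ m)
      = ∑ j ∈ range m, fun y => (m.choose j : ℝ) * (y + a) ^ j := by
  funext y
  simp only [fwdDiff, Finset.sum_apply]
  have h : y + 1 + a = (y + a) + 1 := by ring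
  rw [h, add_pow, Finset.sum_range_succ]
  simp only [one_pow, mul_one, Nat.choose_self, Nat.cast_one]
  rw [add_sub_cancel_right]
  exact Finset.sum_congr rfl fun j _ => by ring

lemma deltapow (m : ℕ) : ∀ (a : ℝ) (n : ℕ), m < n →
    (fwdDiff (1:ℝ))^[n] (fun y => (y + a) ^ m) = 0 := by
  induction m using Nat.strong_induction_on with
  | _ m IH =>
    intro a n hmn
    obtain ⟨n', rfl⟩ : ∃ n', n = n' + 1 := ⟨n - 1, (Nat.succ_pred_eq_of_pos (by omega)).symm⟩
    rw [Function.iterate_succ_apply]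
    show (fwdDiff (1:ℝ))^[n'] (Δ_[(1:ℝ)] fun y => (y + a) ^ m) = 0
    rw [delta_shift, fwdDiff_iter_finset_sum]
    have : ∀ j ∈ range m, (fwdDiff (1:ℝ))^[n'] (fun y => (m.choose j : ℝ) * (y + a) ^ j) = 0 := by
      intro j hj
      have hj' := Finset.mem_range.mp hj
      have h0 : (fun y : ℝ => (m.choose j : ℝ) * (y + a) ^ j)
          = (m.choose j : ℝ) • (fun y : ℝ => (y + a) ^ j) := by
        funext y; simp [smul_eq_mul]
      rw [h0, fwdDiff_iter_const_smul, IH j hj' a n' (by omega), smul_zero]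
    rw [Finset.sum_congr rfl this, Finset.sum_const_zero]

lemma altsum (n : ℕ) (hn : 1 ≤ n) (x : ℝ) :
    ∑ k ∈ range (n + 1), (-1 : ℝ) ^ (n - k) * (n.choose k : ℝ) * ((k : ℝ) + x) ^ (n - 1) = 0 := by
  have h := fwdDiff_iter_eq_sum_shift (1 : ℝ) (fun y => (y + x) ^ (n - 1)) n 0
  rw [deltapow (n - 1) x n (by omega)] at h
  simp only [Pi.zero_apply, zero_add, nsmul_eq_mul, mul_one, zsmul_eq_mul] at h
  rw [h]
  apply Finset.sum_congr rfl
  intro k _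
  push_cast
  ring

lemma eval_lemma (n : ℕ) (hn : 1 ≤ n) (x : ℝ) :
    (-x) ^ n + ∑ k ∈ Icc 1 n,
      (n.choose k : ℝ) * x * (x + k) ^ (k - 1) * (-x - k) ^ (n - k) = 0 := by
  have h := altsum n hn x
  rw [Finset.sum_range_succ'] at h
  have hS : ∑ k ∈ Icc 1 n,
      (n.choose k : ℝ) * x * (x + k) ^ (k - 1) * (-x - k) ^ (n - k)
      = x * ∑ i ∈ range n,
          (-1 : ℝ) ^ (n - (i + 1)) * (n.choose (i + 1) : ℝ) * (((i + 1 : ℕ) : ℝ) + x) ^ (n - 1) := by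
    rw [Finset.mul_sum, ← Finset.Ico_add_one_right_eq_Icc, Finset.sum_Ico_eq_sum_range,
      show n + 1 - 1 = n by omega]
    apply Finset.sum_congr rfl
    intro i hi
    have hi' : i < n := Finset.mem_range.mp hi
    rw [show 1 + i = i + 1 by omega]
    have e1 : (-x - ((i + 1 : ℕ) : ℝ)) = -(x + ((i + 1 : ℕ) : ℝ)) := by ring
    rw [e1, neg_pow, show i + 1 - 1 = i by omega]
    have e3 : (x + ((i + 1 : ℕ) : ℝ)) ^ i * (x + ((i + 1 : ℕ) : ℝ)) ^ (n - (i + 1))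
        = (x + ((i + 1 : ℕ) : ℝ)) ^ (n - 1) := by
      rw [← pow_add]; congr 1; omega
    linear_combination ((n.choose (i+1) : ℝ) * x * (-1:ℝ)^(n - (i+1))) * e3
  rw [hS]
  have hx : (-x) ^ n = x * ((-1 : ℝ) ^ (n - 0) * (n.choose 0 : ℝ) * (((0 : ℕ) : ℝ) + x) ^ (n - 1)) := by
    simp only [Nat.choose_zero_right, Nat.cast_one, Nat.cast_zero, zero_add, Nat.sub_zero, mul_one]
    rw [neg_pow]
    have hxx : x * x ^ (n - 1) = x ^ n := by
      rw [← pow_succ']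
      congr 1
      omega
    linear_combination (-((-1:ℝ)^n)) * hxx
  rw [hx]
  linear_combination x * h

theorem abel_identity (n : ℕ) (hn : 1 ≤ n) (x₁ x₂ : ℝ) :
    (x₁ + x₂ + n) ^ n
      = (x₂ + n) ^ n
        + ∑ k ∈ Finset.Icc 1 n,
            (n.choose k : ℝ) * x₁ * (x₁ + k) ^ (k - 1) * (x₂ + n - k) ^ (n - k) := by
  induction n, hn using Nat.le_induction generalizing x₁ x₂ with
  | base =>
    simp [Finset.Icc_self]
    ring
  | succ m hm IH =>
    set x := x₁
    set y := x₂
    -- the difference function has zero derivative everywhere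
    have key : ∀ z : ℝ, HasDerivAt (fun z : ℝ =>
        (x + z + ((m + 1 : ℕ) : ℝ)) ^ (m + 1)
          - ((z + ((m + 1 : ℕ) : ℝ)) ^ (m + 1)
            + ∑ k ∈ Finset.Icc 1 (m + 1),
                ((m + 1).choose k : ℝ) * x * (x + (k : ℝ)) ^ (k - 1)
                  * (z + ((m + 1 : ℕ) : ℝ) - (k : ℝ)) ^ (m + 1 - k))) 0 z := by
      intro z
      have h1 : HasDerivAt (fun z : ℝ => x + z + ((m + 1 : ℕ) : ℝ)) 1 z := by
        simpa using ((hasDerivAt_id z).const_add x).add_const ((m + 1 : ℕ) : ℝ)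
      have hL := h1.fun_pow (m + 1)
      have h2 : HasDerivAt (fun z : ℝ => z + ((m + 1 : ℕ) : ℝ)) 1 z := by
        simpa using (hasDerivAt_id z).add_const ((m + 1 : ℕ) : ℝ)
      have hY := h2.fun_pow (m + 1)
      have hS : HasDerivAt (fun z : ℝ => ∑ k ∈ Finset.Icc 1 (m + 1),
          ((m + 1).choose k : ℝ) * x * (x + (k : ℝ)) ^ (k - 1)
            * (z + ((m + 1 : ℕ) : ℝ) - (k : ℝ)) ^ (m + 1 - k))
          (∑ k ∈ Finset.Icc 1 (m + 1),
          ((m + 1).choose k : ℝ) * x * (x + (k : ℝ)) ^ (k - 1)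
            * (((m + 1 - k : ℕ) : ℝ) * (z + ((m + 1 : ℕ) : ℝ) - (k : ℝ)) ^ (m + 1 - k - 1) * 1)) z := by
        apply HasDerivAt.fun_sum
        intro k hk
        have h3 : HasDerivAt (fun z : ℝ => z + ((m + 1 : ℕ) : ℝ) - (k : ℝ)) 1 z := by
          simpa using ((hasDerivAt_id z).add_const ((m + 1 : ℕ) : ℝ)).sub_const (k : ℝ)
        exact (h3.fun_pow (m + 1 - k)).const_mul _
      have hD := hL.fun_sub (hY.fun_add hS)
      refine hD.congr_deriv (Eq.symm ?_)
      -- show the derivative value is zero, using the inductive hypothesis at (x, z+1)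
      rw [eq_comm, sub_eq_zero]
      have hIH := IH x (z + 1)
      rw [Finset.sum_Icc_succ_top (by omega : 1 ≤ m + 1)]
      simp only [Nat.add_sub_cancel, Nat.sub_self, Nat.cast_zero, zero_mul, mul_zero, add_zero,
        mul_one]
      have hsum : ∑ k ∈ Finset.Icc 1 m,
          ((m + 1).choose k : ℝ) * x * (x + (k : ℝ)) ^ (k - 1)
            * (((m + 1 - k : ℕ) : ℝ) * (z + ((m + 1 : ℕ) : ℝ) - (k : ℝ)) ^ (m + 1 - k - 1))
          = ((m : ℝ) + 1) * ∑ k ∈ Finset.Icc 1 m,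
              (m.choose k : ℝ) * x * (x + (k : ℝ)) ^ (k - 1)
                * ((z + 1) + (m : ℝ) - (k : ℝ)) ^ (m - k) := by
        rw [Finset.mul_sum]
        apply Finset.sum_congr rfl
        intro k hk
        have hk' : k ≤ m := (Finset.mem_Icc.mp hk).2
        have hnat : (m + 1) * m.choose k = (m + 1).choose k * (m + 1 - k) := by
          rw [← Nat.choose_succ_right_eq, Nat.add_one_mul_choose_eq]
        have hc : ((m : ℝ) + 1) * (m.choose k : ℝ)
            = ((m + 1).choose k : ℝ) * ((m + 1 - k : ℕ) : ℝ) := by exact_mod_cast hnat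
        rw [show m + 1 - k - 1 = m - k by omega]
        have hb : (z + ((m + 1 : ℕ) : ℝ) - (k : ℝ)) = (z + 1) + (m : ℝ) - (k : ℝ) := by
          push_cast; ring
        rw [hb]
        linear_combination (-(x * (x + (k : ℝ)) ^ (k - 1) * ((z + 1) + (m : ℝ) - (k : ℝ)) ^ (m - k))) * hc
      rw [hsum]
      push_cast
      linear_combination ((m : ℝ) + 1) * hIH
    have hconst := is_const_of_deriv_eq_zero (fun z => (key z).differentiableAt)
      (fun z => (key z).deriv) y (-x - ((m + 1 : ℕ) : ℝ))
    have hy0 : (x + (-x - ((m + 1 : ℕ) : ℝ)) + ((m + 1 : ℕ) : ℝ)) ^ (m + 1)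
        - (((-x - ((m + 1 : ℕ) : ℝ)) + ((m + 1 : ℕ) : ℝ)) ^ (m + 1)
          + ∑ k ∈ Finset.Icc 1 (m + 1),
              ((m + 1).choose k : ℝ) * x * (x + (k : ℝ)) ^ (k - 1)
                * ((-x - ((m + 1 : ℕ) : ℝ)) + ((m + 1 : ℕ) : ℝ) - (k : ℝ)) ^ (m + 1 - k)) = 0 := by
      rw [show x + (-x - ((m + 1 : ℕ) : ℝ)) + ((m + 1 : ℕ) : ℝ) = 0 by ring,
        zero_pow (by omega : m + 1 ≠ 0), zero_sub, neg_eq_zero,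
        show (-x - ((m + 1 : ℕ) : ℝ)) + ((m + 1 : ℕ) : ℝ) = -x by ring]
      exact eval_lemma (m + 1) (by omega) x
    rw [hy0] at hconst
    linarith [hconst]
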